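/- If f: ℝ → ℝ is differentiable at x with f'(x) > 0, then the external morphological gradient g_r^+[f](x) = (δ_r[f](x) − f(x))/r converges to f'(x) as r → 0⁺. -/

import Mathlib

open Filter Set

/-- The external morphological gradient `(δ_r[f](x) − f(x))/r` converges to
`f'(x)` as `r → 0⁺`, if `f'(x) > 0`. -/
theorem external_gradient_tendsto_deriv (f : ℝ → ℝ) (x : ℝ)
    (hnbhd : ∀ᶠ y in nhds x, DifferentiableAt ℝ f y)
    (hf : DifferentiableAt ℝ f x) (hpos : 0 < deriv f x) :
    Tendsto (fun r : ℝ =>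
        (sSup ((fun b => f (x - b)) '' {b : ℝ | |b| ≤ r}) - f x) / r)
      (nhdsWithin 0 (Ioi 0)) (nhds (deriv f x)) := by
  set L := deriv f x with hL
  rw [Metric.tendsto_nhdsWithin_nhds]
  intro ε hε
  have hd : HasDerivAt f L x := hf.hasDerivAt
  rw [hasDerivAt_iff_isLittleO] at hd
  have h2 : ∀ᶠ y in nhds x, |f y - f x - (y - x) * L| ≤ ε/2 * |y - x| := by
    have := hd.def (by positivity : (0:ℝ) < ε/2)
    simpa [Real.norm_eq_abs, smul_eq_mul] using this
  rw [Metric.eventually_nhds_iff] at h2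
  obtain ⟨δ, hδ, hδ'⟩ := h2
  refine ⟨δ/2, by positivity, ?_⟩
  intro r hr hrd
  have hr0 : 0 < r := hr
  have hrδ : r < δ := by
    have h1 : dist r (0:ℝ) = r := by simp [Real.dist_eq, abs_of_pos hr0]
    rw [h1] at hrd; linarith
  set S := (fun b => f (x - b)) '' {b : ℝ | |b| ≤ r} with hS
  have hbound : ∀ v ∈ S, v ≤ f x + r * L + ε/2 * r := by
    rintro v ⟨b, hb, rfl⟩
    simp only [mem_setOf_eq] at hb
    have hy : dist (x - b) x < δ := by
      rw [Real.dist_eq]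
      have : x - b - x = -b := by ring
      rw [this, abs_neg]; linarith
    have := hδ' hy
    have h3 : x - b - x = -b := by ring
    rw [h3, abs_neg] at this
    have habs := (abs_le.mp this).2
    have hbr : -b * L ≤ r * L := by
      apply mul_le_mul_of_nonneg_right _ hpos.le
      have := (abs_le.mp hb).1; linarith
    nlinarith [abs_le.mp hb]
  have hne : S.Nonempty := ⟨f (x - 0), ⟨0, by simp [hr0.le], rfl⟩⟩
  have hbdd : BddAbove S := ⟨f x + r * L + ε/2 * r, hbound⟩
  have hupper : sSup S ≤ f x + r * L + ε/2 * r := csSup_le hne hbound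
  have hmem : f (x - (-r)) ∈ S := ⟨-r, by simp [abs_of_pos hr0, hr0.le], rfl⟩
  have hlow0 : f x + r * L - ε/2 * r ≤ f (x - (-r)) := by
    have hy : dist (x - (-r)) x < δ := by
      rw [Real.dist_eq]
      have h3 : x - (-r) - x = r := by ring
      rw [h3, abs_of_pos hr0]; exact hrδ
    have := hδ' hy
    have h3 : x - (-r) - x = r := by ring
    rw [h3, abs_of_pos hr0] at this
    have := (abs_le.mp this).1
    linarith
  have hlower : f x + r * L - ε/2 * r ≤ sSup S := le_trans hlow0 (le_csSup hbdd hmem)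
  rw [Real.dist_eq]
  have heq : (sSup S - f x) / r - L = (sSup S - f x - L * r) / r := by
    field_simp
  rw [heq, abs_div, abs_of_pos hr0]
  rw [div_lt_iff₀ hr0]
  have : |sSup S - f x - L * r| ≤ ε/2 * r := by
    rw [abs_le]; constructor <;> nlinarith
  nlinarith
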